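/- Let L be the real Lie algebra of complex 4×4 matrices of the form [[x, u, v, i·w], [0, y, i·z, −conj(v)], [0, 0, −y, −conj(u)], [0, 0, 0, −x]] (x, y, z, w ∈ ℝ, u, v ∈ ℂ) under the commutator bracket. Then the derived algebra [L, L] equals the subalgebra 𝔫 = {A ∈ L : x = 0 and y = 0}, which has real dimension 6 (so [L,L] has codimension 2 in L), and L is a solvable Lie algebra. -/

import Mathlib

open Matrix

attribute [local instance 100] LieRing.ofAssociativeRing

/-- The matrix `[[x, u, v, i·w], [0, y, i·z, −v̄], [0, 0, −y, −ū], [0, 0, 0, −x]]`. -/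
def matL (x y z w : ℝ) (u v : ℂ) : Matrix (Fin 4) (Fin 4) ℂ :=
  !![(x : ℂ), u, v, Complex.I * (w : ℂ);
     0, (y : ℂ), Complex.I * (z : ℂ), -(star v);
     0, 0, -(y : ℂ), -(star u);
     0, 0, 0, -(x : ℂ)]

/-- The set `L` of all matrices of the above form. -/
def Lset : Set (Matrix (Fin 4) (Fin 4) ℂ) :=
  {A | ∃ (x y z w : ℝ) (u v : ℂ), A = matL x y z w u v}

lemma matL_add (x y z w x' y' z' w' : ℝ) (u v u' v' : ℂ) :
    matL x y z w u v + matL x' y' z' w' u' v'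
      = matL (x+x') (y+y') (z+z') (w+w') (u+u') (v+v') := by
  ext i j
  fin_cases i <;> fin_cases j <;>
    simp [matL, Matrix.vecHead, Matrix.vecTail] <;> ring

lemma matL_smul (r x y z w : ℝ) (u v : ℂ) :
    r • matL x y z w u v = matL (r*x) (r*y) (r*z) (r*w) (r•u) (r•v) := by
  ext i j
  fin_cases i <;> fin_cases j <;>
    simp [matL, Matrix.vecHead, Matrix.vecTail, Complex.real_smul] <;> ring

lemma matL_zero : matL 0 0 0 0 0 0 = 0 := by
  ext i j
  fin_cases i <;> fin_cases j <;> simp [matL, Matrix.vecHead, Matrix.vecTail]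

lemma matL_inj {x y z w x' y' z' w' : ℝ} {u v u' v' : ℂ}
    (h : matL x y z w u v = matL x' y' z' w' u' v') :
    x = x' ∧ y = y' ∧ z = z' ∧ w = w' ∧ u = u' ∧ v = v' := by
  have h00 := congrFun (congrFun h 0) 0
  have h01 := congrFun (congrFun h 0) 1
  have h02 := congrFun (congrFun h 0) 2
  have h03 := congrFun (congrFun h 0) 3
  have h11 := congrFun (congrFun h 1) 1
  have h12 := congrFun (congrFun h 1) 2
  simp [matL, Complex.ext_iff] at h00 h01 h02 h03 h11 h12
  exact ⟨h00, h11, h12, h03, Complex.ext h01.1 h01.2, Complex.ext h02.1 h02.2⟩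

set_option maxHeartbeats 1000000 in
lemma matL_bracket (x y z w X Y Z W : ℝ) (u v U V : ℂ) :
    matL x y z w u v * matL X Y Z W U V - matL X Y Z W U V * matL x y z w u v
      = matL 0 0 (2*(y*Z - Y*z)) (2*x*W - 2*X*w - 2*(u * star V).im - 2*(v * star U).im)
          ((x-y)•U - (X-Y)•u) ((x+y)•V - (X+Y)•v + Complex.I*(u*(Z:ℂ) - U*(z:ℂ))) := by
  ext i j
  fin_cases i <;> fin_cases j <;>
    simp only [matL, Matrix.mul_apply, Fin.sum_univ_four, Matrix.sub_apply, Matrix.cons_val',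
      Matrix.cons_val_zero, Matrix.cons_val_one, Matrix.head_cons, Matrix.empty_val',
      Matrix.cons_val_fin_one, Matrix.head_fin_const, Matrix.of_apply, Matrix.vecHead,
      Matrix.vecTail, Matrix.cons_val_two, Matrix.cons_val_three, Function.comp,
      Complex.real_smul] <;>
    (apply Complex.ext <;>
      simp [Matrix.vecHead, Matrix.vecTail, Complex.mul_re, Complex.mul_im,
        Complex.add_re, Complex.add_im] <;> ring)

/-- `L` as a real Lie subalgebra of the complex `4×4` matrices. -/
def Lalg : LieSubalgebra ℝ (Matrix (Fin 4) (Fin 4) ℂ) where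
  carrier := Lset
  zero_mem' := ⟨0, 0, 0, 0, 0, 0, matL_zero.symm⟩
  add_mem' := by
    rintro A B ⟨x, y, z, w, u, v, rfl⟩ ⟨x', y', z', w', u', v', rfl⟩
    exact ⟨x+x', y+y', z+z', w+w', u+u', v+v', (matL_add ..)⟩
  smul_mem' := by
    rintro r A ⟨x, y, z, w, u, v, rfl⟩
    exact ⟨r*x, r*y, r*z, r*w, r•u, r•v, (matL_smul ..)⟩
  lie_mem' := by
    rintro A B ⟨x, y, z, w, u, v, rfl⟩ ⟨X, Y, Z, W, U, V, rfl⟩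
    exact ⟨0, 0, _, _, _, _, by rw [Ring.lie_def, matL_bracket]⟩

lemma mem_Lalg (x y z w : ℝ) (u v : ℂ) : matL x y z w u v ∈ Lalg :=
  ⟨x, y, z, w, u, v, rfl⟩

/-- A convenient name for elements of `Lalg`. -/
noncomputable def el (x y z w : ℝ) (u v : ℂ) : Lalg := ⟨matL x y z w u v, mem_Lalg x y z w u v⟩

lemma el_bracket (x y z w X Y Z W : ℝ) (u v U V : ℂ) :
    ⁅el x y z w u v, el X Y Z W U V⁆
      = el 0 0 (2*(y*Z - Y*z)) (2*x*W - 2*X*w - 2*(u * star V).im - 2*(v * star U).im)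
          ((x-y)•U - (X-Y)•u) ((x+y)•V - (X+Y)•v + Complex.I*(u*(Z:ℂ) - U*(z:ℂ))) := by
  apply Subtype.ext
  show ⁅matL x y z w u v, matL X Y Z W U V⁆ = _
  rw [Ring.lie_def, matL_bracket]
  rfl

/-- The candidate for `[L,L]`, as a submodule of `Lalg`. -/
noncomputable def NS : Submodule ℝ Lalg where
  carrier := {A : Lalg | ∃ (z w : ℝ) (u v : ℂ),
      (A : Matrix (Fin 4) (Fin 4) ℂ) = matL 0 0 z w u v}
  zero_mem' := ⟨0, 0, 0, 0, matL_zero.symm⟩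
  add_mem' := by
    rintro A B ⟨z, w, u, v, hA⟩ ⟨z', w', u', v', hB⟩
    refine ⟨z+z', w+w', u+u', v+v', ?_⟩
    show (A : Matrix (Fin 4) (Fin 4) ℂ) + B = _
    rw [hA, hB, matL_add]; norm_num
  smul_mem' := by
    rintro r A ⟨z, w, u, v, hA⟩
    refine ⟨r*z, r*w, r•u, r•v, ?_⟩
    show r • (A : Matrix (Fin 4) (Fin 4) ℂ) = _
    rw [hA, matL_smul]; norm_num

/-- The candidate for the second derived algebra, as a submodule of `Lalg`. -/
noncomputable def PS : Submodule ℝ Lalg where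
  carrier := {A : Lalg | ∃ (w : ℝ) (v : ℂ),
      (A : Matrix (Fin 4) (Fin 4) ℂ) = matL 0 0 0 w 0 v}
  zero_mem' := ⟨0, 0, matL_zero.symm⟩
  add_mem' := by
    rintro A B ⟨w, v, hA⟩ ⟨w', v', hB⟩
    refine ⟨w+w', v+v', ?_⟩
    show (A : Matrix (Fin 4) (Fin 4) ℂ) + B = _
    rw [hA, hB, matL_add]; norm_num
  smul_mem' := by
    rintro r A ⟨w, v, hA⟩
    refine ⟨r*w, r•v, ?_⟩
    show r • (A : Matrix (Fin 4) (Fin 4) ℂ) = _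
    rw [hA, matL_smul]; norm_num

lemma exists_el (A : Lalg) : ∃ (x y z w : ℝ) (u v : ℂ), A = el x y z w u v := by
  obtain ⟨x, y, z, w, u, v, h⟩ := A.2
  exact ⟨x, y, z, w, u, v, Subtype.ext h⟩

lemma bracket_mem_NS (A B : Lalg) : ⁅A, B⁆ ∈ NS := by
  obtain ⟨x, y, z, w, u, v, rfl⟩ := exists_el A
  obtain ⟨X, Y, Z, W, U, V, rfl⟩ := exists_el B
  rw [el_bracket]
  exact ⟨_, _, _, _, rfl⟩

lemma bracket_mem_PS {A B : Lalg} (hA : A ∈ NS) (hB : B ∈ NS) : ⁅A, B⁆ ∈ PS := by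
  obtain ⟨z, w, u, v, hA⟩ := hA
  obtain ⟨Z, W, U, V, hB⟩ := hB
  have hA' : A = el 0 0 z w u v := Subtype.ext hA
  have hB' : B = el 0 0 Z W U V := Subtype.ext hB
  subst hA' hB'
  rw [el_bracket]
  refine ⟨-2*(u * star V).im - 2*(v * star U).im, Complex.I*(u*(Z:ℂ) - U*(z:ℂ)), ?_⟩
  show matL _ _ _ _ _ _ = _
  norm_num

lemma bracket_PS_eq_zero {A B : Lalg} (hA : A ∈ PS) (hB : B ∈ PS) : ⁅A, B⁆ = 0 := by
  obtain ⟨w, v, hA⟩ := hA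
  obtain ⟨W, V, hB⟩ := hB
  have hA' : A = el 0 0 0 w 0 v := Subtype.ext hA
  have hB' : B = el 0 0 0 W 0 V := Subtype.ext hB
  subst hA' hB'
  rw [el_bracket]
  apply Subtype.ext
  show matL _ _ _ _ _ _ = (0 : Matrix (Fin 4) (Fin 4) ℂ)
  rw [← matL_zero]
  norm_num

lemma derived_one_eq :
    (LieAlgebra.derivedSeries ℝ Lalg 1).toSubmodule = NS := by
  have h1 : LieAlgebra.derivedSeries ℝ Lalg 1 = ⁅(⊤ : LieIdeal ℝ Lalg), (⊤ : LieIdeal ℝ Lalg)⁆ := by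
    rw [LieAlgebra.derivedSeries_def, LieAlgebra.derivedSeriesOfIdeal_succ,
      LieAlgebra.derivedSeriesOfIdeal_zero]
  rw [h1]
  apply le_antisymm
  · rw [LieSubmodule.lieIdeal_oper_eq_linear_span']
    rw [Submodule.span_le]
    rintro m ⟨A, -, B, -, rfl⟩
    exact bracket_mem_NS A B
  · rintro A ⟨z, w, u, v, hA⟩
    have hA' : A = el 0 0 z w u v := Subtype.ext hA
    have key : A = ⁅el 1 0 0 0 0 0, el 0 0 0 (w/2) (u/2) (v/2)⁆
        + ⁅el 0 1 0 0 0 0, el 0 0 (z/2) 0 (-(u/2)) (v/2)⁆ := by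
      rw [el_bracket, el_bracket, hA']
      apply Subtype.ext
      show matL 0 0 z w u v = matL _ _ _ _ _ _ + matL _ _ _ _ _ _
      rw [matL_add]
      norm_num
      rw [show 2 * (z / 2) = z by ring, show 2 * (w / 2) = w by ring]
    rw [key]
    exact Submodule.add_mem _
      ((LieSubmodule.mem_toSubmodule _).mpr
        (LieSubmodule.lie_mem_lie (LieSubmodule.mem_top _) (LieSubmodule.mem_top _)))
      ((LieSubmodule.mem_toSubmodule _).mpr
        (LieSubmodule.lie_mem_lie (LieSubmodule.mem_top _) (LieSubmodule.mem_top _)))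

lemma derived_two_le :
    (LieAlgebra.derivedSeries ℝ Lalg 2).toSubmodule ≤ PS := by
  have h2 : LieAlgebra.derivedSeries ℝ Lalg 2
      = ⁅LieAlgebra.derivedSeries ℝ Lalg 1, LieAlgebra.derivedSeries ℝ Lalg 1⁆ := by
    rw [LieAlgebra.derivedSeries_def, LieAlgebra.derivedSeriesOfIdeal_succ]
  rw [h2, LieSubmodule.lieIdeal_oper_eq_linear_span', Submodule.span_le]
  rintro m ⟨A, hA, B, hB, rfl⟩
  have hA' : A ∈ NS := derived_one_eq ▸ (LieSubmodule.mem_toSubmodule _).mpr hA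
  have hB' : B ∈ NS := derived_one_eq ▸ (LieSubmodule.mem_toSubmodule _).mpr hB
  exact bracket_mem_PS hA' hB'

lemma derived_three_eq_bot : LieAlgebra.derivedSeries ℝ Lalg 3 = ⊥ := by
  have h3 : LieAlgebra.derivedSeries ℝ Lalg 3
      = ⁅LieAlgebra.derivedSeries ℝ Lalg 2, LieAlgebra.derivedSeries ℝ Lalg 2⁆ := by
    rw [LieAlgebra.derivedSeries_def, LieAlgebra.derivedSeriesOfIdeal_succ]
  rw [LieSubmodule.eq_bot_iff]
  intro m hm
  have : m ∈ (LieAlgebra.derivedSeries ℝ Lalg 3).toSubmodule :=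
    (LieSubmodule.mem_toSubmodule _).mpr hm
  rw [h3, LieSubmodule.lieIdeal_oper_eq_linear_span'] at this
  have hle : Submodule.span ℝ {m : Lalg | ∃ x ∈ LieAlgebra.derivedSeries ℝ Lalg 2,
      ∃ n ∈ LieAlgebra.derivedSeries ℝ Lalg 2, ⁅x, n⁆ = m} ≤ (⊥ : Submodule ℝ Lalg) := by
    rw [Submodule.span_le]
    rintro p ⟨A, hA, B, hB, rfl⟩
    have hA' : A ∈ PS := derived_two_le ((LieSubmodule.mem_toSubmodule _).mpr hA)
    have hB' : B ∈ PS := derived_two_le ((LieSubmodule.mem_toSubmodule _).mpr hB)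
    simpa using bracket_PS_eq_zero hA' hB'
  simpa using hle this

/-- Parametrization of `Lalg`. -/
noncomputable def phi : (ℝ × ℝ × ℝ × ℝ × ℂ × ℂ) →ₗ[ℝ] Lalg where
  toFun p := el p.1 p.2.1 p.2.2.1 p.2.2.2.1 p.2.2.2.2.1 p.2.2.2.2.2
  map_add' p q := by
    apply Subtype.ext
    show matL _ _ _ _ _ _ = matL _ _ _ _ _ _ + matL _ _ _ _ _ _
    rw [matL_add]
    rfl
  map_smul' r p := by
    apply Subtype.ext
    show matL _ _ _ _ _ _ = r • matL _ _ _ _ _ _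
    rw [matL_smul]
    rfl

lemma phi_bij : Function.Bijective phi := by
  constructor
  · intro p q h
    have h' : matL p.1 p.2.1 p.2.2.1 p.2.2.2.1 p.2.2.2.2.1 p.2.2.2.2.2
        = matL q.1 q.2.1 q.2.2.1 q.2.2.2.1 q.2.2.2.2.1 q.2.2.2.2.2 :=
      congrArg Subtype.val h
    obtain ⟨h1, h2, h3, h4, h5, h6⟩ := matL_inj h'
    obtain ⟨p1, p2, p3, p4, p5, p6⟩ := p
    obtain ⟨q1, q2, q3, q4, q5, q6⟩ := q
    simp_all
  · intro A
    obtain ⟨x, y, z, w, u, v, rfl⟩ := exists_el A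
    exact ⟨(x, y, z, w, u, v), rfl⟩

/-- Parametrization of the derived algebra. -/
noncomputable def psi : (ℝ × ℝ × ℂ × ℂ) →ₗ[ℝ] (LieAlgebra.derivedSeries ℝ Lalg 1) where
  toFun p := ⟨el 0 0 p.1 p.2.1 p.2.2.1 p.2.2.2,
    by
      have : (el 0 0 p.1 p.2.1 p.2.2.1 p.2.2.2 : Lalg) ∈
          (LieAlgebra.derivedSeries ℝ Lalg 1).toSubmodule := by
        rw [derived_one_eq]; exact ⟨p.1, p.2.1, p.2.2.1, p.2.2.2, rfl⟩
      exact (LieSubmodule.mem_toSubmodule _).mp this⟩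
  map_add' p q := by
    apply Subtype.ext
    apply Subtype.ext
    show matL _ _ _ _ _ _ = matL _ _ _ _ _ _ + matL _ _ _ _ _ _
    rw [matL_add]
    norm_num
  map_smul' r p := by
    apply Subtype.ext
    apply Subtype.ext
    show matL _ _ _ _ _ _ = r • matL _ _ _ _ _ _
    rw [matL_smul]
    norm_num

lemma psi_bij : Function.Bijective psi := by
  constructor
  · intro p q h
    have h' : matL 0 0 p.1 p.2.1 p.2.2.1 p.2.2.2 = matL 0 0 q.1 q.2.1 q.2.2.1 q.2.2.2 :=
      congrArg Subtype.val (congrArg Subtype.val h)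
    obtain ⟨-, -, h3, h4, h5, h6⟩ := matL_inj h'
    obtain ⟨p1, p2, p3, p4⟩ := p
    obtain ⟨q1, q2, q3, q4⟩ := q
    simp_all
  · intro A
    have hA : (A : Lalg) ∈ NS := by
      rw [← derived_one_eq]; exact (LieSubmodule.mem_toSubmodule _).mpr A.2
    obtain ⟨z, w, u, v, h⟩ := hA
    exact ⟨(z, w, u, v), Subtype.ext (Subtype.ext h.symm)⟩

/-- `L` is a real Lie algebra (a Lie subalgebra of the complex 4×4 matrices with
the commutator bracket over ℝ) whose derived algebra `[L,L]` equals
`𝔫 = {A ∈ L : x = 0 and y = 0}`, of real dimension 6 (so of codimension 2 in the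
8-dimensional `L`), and `L` is solvable. -/
theorem stmt3 :
    ∃ Lalg : LieSubalgebra ℝ (Matrix (Fin 4) (Fin 4) ℂ),
      (Lalg : Set (Matrix (Fin 4) (Fin 4) ℂ)) = Lset ∧
      ((LieAlgebra.derivedSeries ℝ Lalg 1 : Set Lalg)
          = {A : Lalg | ∃ (z w : ℝ) (u v : ℂ),
              (A : Matrix (Fin 4) (Fin 4) ℂ) = matL 0 0 z w u v}) ∧
      Module.finrank ℝ (LieAlgebra.derivedSeries ℝ Lalg 1) = 6 ∧
      Module.finrank ℝ Lalg = 8 ∧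
      LieAlgebra.IsSolvable Lalg := by
  refine ⟨Lalg, rfl, ?_, ?_, ?_, ?_⟩
  · ext A
    constructor
    · intro hA
      have : A ∈ (LieAlgebra.derivedSeries ℝ Lalg 1).toSubmodule :=
        (LieSubmodule.mem_toSubmodule _).mpr hA
      rw [derived_one_eq] at this
      exact this
    · intro hA
      have : A ∈ (LieAlgebra.derivedSeries ℝ Lalg 1).toSubmodule := by
        rw [derived_one_eq]; exact hA
      exact (LieSubmodule.mem_toSubmodule _).mp this
  · have e := LinearEquiv.ofBijective psi psi_bij
    rw [← e.finrank_eq]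
    simp [Module.finrank_prod, Complex.finrank_real_complex]
  · have e := LinearEquiv.ofBijective phi phi_bij
    rw [← e.finrank_eq]
    simp [Module.finrank_prod, Complex.finrank_real_complex]
  · exact (LieAlgebra.isSolvable_iff ℝ _).mpr ⟨3, derived_three_eq_bot⟩
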